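/- Let Z₁ and W be independent standard normal random variables, ρ ∈ (-1, 1), and Z₂ = ρ Z₁ + √(1-ρ²) W, so that (Z₁, Z₂) is bivariate standard Gaussian with correlation ρ. Then lim_{u→1⁻} P(Φ(Z₁) > u, Φ(Z₂) > u) / (1 - u) = 0; that is, any bivariate Gaussian pair with correlation strictly less than one is asymptotically independent. -/

import Mathlib

open MeasureTheory ProbabilityTheory Real Set Filter
open scoped Topology ENNReal

/-- The standard normal distribution function. -/
noncomputable def Phi (z : ℝ) : ℝ :=
  ∫ t in Set.Iic z, (Real.sqrt (2 * Real.pi))⁻¹ * Real.exp (-(t ^ 2) / 2)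

/-- The transformation `g(z) = (1 - Φ(z))⁻¹ - 1`. -/
noncomputable def g (z : ℝ) : ℝ := (1 - Phi z)⁻¹ - 1


namespace GaussAux

noncomputable def npdf : ℝ → ℝ := gaussianPDFReal 0 1

lemma npdf_def (t : ℝ) : npdf t = (Real.sqrt (2 * Real.pi))⁻¹ * Real.exp (-(t ^ 2) / 2) := by
  simp [npdf, gaussianPDFReal]

lemma npdf_pos (t : ℝ) : 0 < npdf t := gaussianPDFReal_pos 0 1 t one_ne_zero

lemma npdf_integrable : Integrable npdf := integrable_gaussianPDFReal 0 1

lemma npdf_integral : ∫ t, npdf t = 1 := integral_gaussianPDFReal_eq_one 0 one_ne_zero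

lemma npdf_continuous : Continuous npdf := by
  have : npdf = fun t => (Real.sqrt (2 * Real.pi))⁻¹ * Real.exp (-(t ^ 2) / 2) :=
    funext npdf_def
  rw [this]; fun_prop

lemma Phi_eq (z : ℝ) : Phi z = ∫ t in Iic z, npdf t := by
  unfold Phi; congr 1; ext t; rw [npdf_def]

lemma one_sub_Phi (z : ℝ) : 1 - Phi z = ∫ t in Ioi z, npdf t := by
  have h := intervalIntegral.integral_Iic_add_Ioi (b := z) npdf_integrable.integrableOn
    npdf_integrable.integrableOn
  rw [Phi_eq]
  rw [npdf_integral] at h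
  linarith

lemma one_sub_Phi_pos (z : ℝ) : 0 < 1 - Phi z := by
  rw [one_sub_Phi]
  refine (setIntegral_pos_iff_support_of_nonneg_ae
    (ae_of_all _ fun t => (npdf_pos t).le) npdf_integrable.integrableOn).2 ?_
  have hsupp : Function.support npdf = univ := eq_univ_of_forall fun t => (npdf_pos t).ne'
  rw [hsupp, univ_inter, Real.volume_Ioi]
  exact ENNReal.zero_lt_top

lemma Phi_pos (z : ℝ) : 0 < Phi z := by
  rw [Phi_eq]
  refine (setIntegral_pos_iff_support_of_nonneg_ae
    (ae_of_all _ fun t => (npdf_pos t).le) npdf_integrable.integrableOn).2 ?_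
  have hsupp : Function.support npdf = univ := eq_univ_of_forall fun t => (npdf_pos t).ne'
  rw [hsupp, univ_inter, Real.volume_Iic]
  exact ENNReal.zero_lt_top

lemma Phi_lt_one (z : ℝ) : Phi z < 1 := by linarith [one_sub_Phi_pos z]

lemma Phi_sub_Phi (x y : ℝ) : Phi y - Phi x = ∫ t in x..y, npdf t := by
  rw [Phi_eq, Phi_eq]
  exact intervalIntegral.integral_Iic_sub_Iic npdf_integrable.integrableOn
    npdf_integrable.integrableOn

lemma Phi_strictMono : StrictMono Phi := by
  intro x y hxy
  have h := Phi_sub_Phi x y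
  have hpos := intervalIntegral.intervalIntegral_pos_of_pos
    (npdf_continuous.intervalIntegrable x y) npdf_pos hxy
  linarith

lemma Phi_hasDerivAt (z : ℝ) : HasDerivAt Phi (npdf z) z := by
  have h : Phi = fun x => Phi 0 + ∫ t in (0:ℝ)..x, npdf t := by
    funext x
    have := Phi_sub_Phi 0 x
    linarith
  rw [h]
  exact (intervalIntegral.integral_hasDerivAt_right
    (npdf_continuous.intervalIntegrable 0 z)
    (npdf_continuous.stronglyMeasurable.stronglyMeasurableAtFilter)
    npdf_continuous.continuousAt).const_add (Phi 0)

lemma Phi_continuous : Continuous Phi :=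
  continuous_iff_continuousAt.2 fun z => (Phi_hasDerivAt z).continuousAt

lemma Phi_measure (z : ℝ) : gaussianReal 0 1 (Iic z) = ENNReal.ofReal (Phi z) := by
  rw [gaussianReal_apply_eq_integral 0 one_ne_zero, Phi_eq]; rfl

lemma gaussIoi (z : ℝ) : gaussianReal 0 1 (Ioi z) = ENNReal.ofReal (1 - Phi z) := by
  rw [gaussianReal_apply_eq_integral 0 one_ne_zero, one_sub_Phi]; rfl

lemma tendsto_Phi_atTop : Tendsto Phi atTop (𝓝 1) := by
  have h := tendsto_measure_Iic_atTop (gaussianReal 0 1)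
  rw [measure_univ] at h
  have h2 := (ENNReal.tendsto_toReal (by norm_num : (1:ℝ≥0∞) ≠ ⊤)).comp h
  simp only [ENNReal.toReal_one] at h2
  convert h2 using 1
  funext x
  simp [Function.comp, Phi_measure, ENNReal.toReal_ofReal (Phi_pos x).le]

lemma Phi_neg_eq (z : ℝ) : Phi (-z) = 1 - Phi z := by
  rw [one_sub_Phi, Phi_eq]
  rw [show (∫ t in Ioi z, npdf t) = ∫ t in Ioi z, npdf (-t) by
    congr 1; funext t; simp [npdf_def]]
  rw [integral_comp_neg_Ioi]

lemma tendsto_Phi_atBot : Tendsto Phi atBot (𝓝 0) := by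
  have h : Phi = fun x => 1 - Phi (-x) := by
    funext x; have := Phi_neg_eq (-x); rw [neg_neg] at this; linarith
  rw [h]
  have h1 : Tendsto (fun x : ℝ => Phi (-x)) atBot (𝓝 1) :=
    tendsto_Phi_atTop.comp tendsto_neg_atBot_atTop
  have := (tendsto_const_nhds (x := (1:ℝ)) (f := atBot)).sub h1
  simpa using this

noncomputable def PhiInv (u : ℝ) : ℝ := Function.invFun Phi u

lemma Phi_PhiInv {u : ℝ} (h : u ∈ Ioo (0:ℝ) 1) : Phi (PhiInv u) = u := by
  obtain ⟨a, ha⟩ := (tendsto_Phi_atBot.eventually_lt_const h.1).exists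
  obtain ⟨b, hb⟩ := (tendsto_Phi_atTop.eventually_const_lt h.2).exists
  have hab : a ≤ b := (Phi_strictMono.lt_iff_lt.1 (ha.trans hb)).le
  obtain ⟨x, _, hx⟩ := intermediate_value_Icc hab Phi_continuous.continuousOn ⟨ha.le, hb.le⟩
  exact Function.invFun_eq ⟨x, hx⟩

lemma tail_le {c z : ℝ} (hc : 1 ≤ c) (hz : 0 ≤ z) :
    1 - Phi (c * z) ≤ c * Real.exp (-((c ^ 2 - 1) * z ^ 2) / 2) * (1 - Phi z) := by
  have hc0 : 0 < c := lt_of_lt_of_le one_pos hc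
  rw [one_sub_Phi, one_sub_Phi]
  have h1 : (∫ x in Ioi (c * z), npdf x) = c * ∫ x in Ioi z, npdf (c * x) := by
    rw [integral_comp_mul_left_Ioi npdf z hc0, smul_eq_mul, ← mul_assoc,
      mul_inv_cancel₀ hc0.ne', one_mul]
  rw [h1, mul_assoc]
  refine mul_le_mul_of_nonneg_left ?_ hc0.le
  rw [← integral_const_mul _ _]
  refine integral_mono_of_nonneg (ae_of_all _ fun t => (npdf_pos _).le)
    ((npdf_integrable.restrict).const_mul _) ?_
  refine (ae_restrict_iff' measurableSet_Ioi).2 (ae_of_all _ fun t ht => ?_)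
  have key : npdf (c * t) = Real.exp (-((c ^ 2 - 1) * t ^ 2) / 2) * npdf t := by
    rw [npdf_def, npdf_def, ← mul_assoc, mul_comm (Real.exp _) _, mul_assoc, ← Real.exp_add]
    congr 1
    ring
  simp only []
  rw [key]
  refine mul_le_mul_of_nonneg_right ?_ (npdf_pos t).le
  apply Real.exp_le_exp.2
  have ht' : z < t := ht
  have hz2 : z ^ 2 ≤ t ^ 2 := by nlinarith
  have hcc : (0:ℝ) ≤ c ^ 2 - 1 := by nlinarith
  nlinarith [mul_nonneg hcc (by linarith : (0:ℝ) ≤ t ^ 2 - z ^ 2)]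

end GaussAux

open GaussAux in
/-- For a bivariate standard Gaussian pair `(Z₁, Z₂)` with correlation
`ρ ∈ (-1,1)`, `lim_{u→1⁻} P(Φ(Z₁) > u, Φ(Z₂) > u)/(1-u) = 0`: any bivariate Gaussian
pair with correlation strictly less than one is asymptotically independent. -/
theorem gaussian_asymptotic_independence
    {Ω : Type*} [MeasurableSpace Ω] (P : Measure Ω) [IsProbabilityMeasure P]
    (Z₁ W : Ω → ℝ) (hZ₁m : Measurable Z₁) (hWm : Measurable W)
    (hZ₁ : Measure.map Z₁ P = gaussianReal 0 1)
    (hW : Measure.map W P = gaussianReal 0 1)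
    (hZW : IndepFun Z₁ W P)
    (ρ : ℝ) (hρ : ρ ∈ Set.Ioo (-1 : ℝ) 1)
    (Z₂ : Ω → ℝ) (hZ₂ : ∀ ω, Z₂ ω = ρ * Z₁ ω + Real.sqrt (1 - ρ ^ 2) * W ω) :
    Tendsto
      (fun u => (P {ω | u < Phi (Z₁ ω) ∧ u < Phi (Z₂ ω)}).toReal / (1 - u))
      (nhdsWithin 1 (Set.Iio 1)) (nhds 0) := by
  obtain ⟨hρ1, hρ2⟩ := hρ
  set s : ℝ := Real.sqrt (1 - ρ ^ 2) with hs_def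
  have hs : 0 < s := Real.sqrt_pos.2 (by nlinarith)
  set lam : ℝ := if ρ ≤ 0 then 2 else (1 + ρ⁻¹) / 2 with hlam_def
  set kap : ℝ := 1 - max ρ 0 * lam with hkap_def
  have hlam : 1 < lam := by
    rw [hlam_def]; split_ifs with h
    · norm_num
    · push_neg at h
      have h1 : ρ * ρ⁻¹ = 1 := mul_inv_cancel₀ h.ne'
      nlinarith
  have hlam0 : (0:ℝ) < lam := lt_trans one_pos hlam
  have hkap : 0 < kap := by
    rw [hkap_def, hlam_def]
    rcases le_or_gt ρ 0 with h | h
    · rw [max_eq_right h, if_pos h]; norm_num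
    · rw [max_eq_left h.le, if_neg (not_le.2 h)]
      have h1 : ρ * ρ⁻¹ = 1 := mul_inv_cancel₀ h.ne'
      nlinarith
  -- tail probability formula
  have tailP : ∀ (X : Ω → ℝ), Measurable X → Measure.map X P = gaussianReal 0 1 →
      ∀ t : ℝ, P (X ⁻¹' Ioi t) = ENNReal.ofReal (1 - Phi t) := by
    intro X hXm hX t
    rw [← Measure.map_apply hXm measurableSet_Ioi, hX, gaussIoi]
  -- the key bound
  have key : ∀ u ∈ Ioo (Phi 1) 1,
      (P {ω | u < Phi (Z₁ ω) ∧ u < Phi (Z₂ ω)}).toReal / (1 - u)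
        ≤ (1 - Phi (kap * PhiInv u / s))
          + lam * Real.exp (-((lam ^ 2 - 1) * (PhiInv u) ^ 2) / 2) := by
    intro u hu
    have hu01 : u ∈ Ioo (0:ℝ) 1 := ⟨lt_trans (Phi_pos 1) hu.1, hu.2⟩
    set z := PhiInv u with hz_def
    have hΦz : Phi z = u := Phi_PhiInv hu01
    have hz1 : 1 < z := by
      have h := hu.1
      rw [← hΦz] at h
      exact Phi_strictMono.lt_iff_lt.1 h
    have hz0 : (0:ℝ) < z := lt_trans one_pos hz1
    have hev : {ω | u < Phi (Z₁ ω) ∧ u < Phi (Z₂ ω)} = {ω | z < Z₁ ω ∧ z < Z₂ ω} := by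
      ext ω
      simp only [mem_setOf_eq, ← hΦz, Phi_strictMono.lt_iff_lt]
    have hincl : {ω | z < Z₁ ω ∧ z < Z₂ ω} ⊆
        (Z₁ ⁻¹' Ioi z ∩ W ⁻¹' Ioi (kap * z / s)) ∪ Z₁ ⁻¹' Ioi (lam * z) := by
      rintro ω ⟨h1, h2⟩
      rcases lt_or_ge (lam * z) (Z₁ ω) with h3 | h3
      · exact Or.inr h3
      · refine Or.inl ⟨h1, ?_⟩
        have hWe : s * W ω = Z₂ ω - ρ * Z₁ ω := by rw [hZ₂ ω]; ring
        have hρZ : ρ * Z₁ ω ≤ max ρ 0 * (lam * z) := by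
          rcases le_or_gt ρ 0 with hρ0 | hρ0
          · calc ρ * Z₁ ω ≤ 0 :=
                  mul_nonpos_iff.2 (Or.inr ⟨hρ0, le_trans hz0.le h1.le⟩)
            _ ≤ max ρ 0 * (lam * z) :=
                  mul_nonneg (le_max_right ρ 0) (by positivity)
          · rw [max_eq_left hρ0.le]
            exact mul_le_mul_of_nonneg_left h3 hρ0.le
        have hkz : kap * z < s * W ω := by
          rw [hWe]
          calc kap * z = z - max ρ 0 * (lam * z) := by rw [hkap_def]; ring
          _ ≤ z - ρ * Z₁ ω := by linarith
          _ < Z₂ ω - ρ * Z₁ ω := by linarith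
        show W ω ∈ Ioi (kap * z / s)
        rw [mem_Ioi, div_lt_iff₀ hs]
        linarith
    have hPAB : P (Z₁ ⁻¹' Ioi z ∩ W ⁻¹' Ioi (kap * z / s))
        = ENNReal.ofReal ((1 - Phi z) * (1 - Phi (kap * z / s))) := by
      rw [(indepFun_iff_measure_inter_preimage_eq_mul.1 hZW) _ _
          measurableSet_Ioi measurableSet_Ioi,
        tailP Z₁ hZ₁m hZ₁, tailP W hWm hW,
        ← ENNReal.ofReal_mul (one_sub_Phi_pos z).le]
    have hA1 : (0:ℝ) ≤ (1 - Phi z) * (1 - Phi (kap * z / s)) :=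
      mul_nonneg (one_sub_Phi_pos z).le (one_sub_Phi_pos _).le
    have hA2 : (0:ℝ) ≤ 1 - Phi (lam * z) := (one_sub_Phi_pos _).le
    have hmb : P {ω | z < Z₁ ω ∧ z < Z₂ ω} ≤
        ENNReal.ofReal ((1 - Phi z) * (1 - Phi (kap * z / s)) + (1 - Phi (lam * z))) := by
      calc P {ω | z < Z₁ ω ∧ z < Z₂ ω}
          ≤ P ((Z₁ ⁻¹' Ioi z ∩ W ⁻¹' Ioi (kap * z / s)) ∪ Z₁ ⁻¹' Ioi (lam * z)) :=
            measure_mono hincl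
        _ ≤ P (Z₁ ⁻¹' Ioi z ∩ W ⁻¹' Ioi (kap * z / s)) + P (Z₁ ⁻¹' Ioi (lam * z)) :=
            measure_union_le _ _
        _ = ENNReal.ofReal ((1 - Phi z) * (1 - Phi (kap * z / s)) + (1 - Phi (lam * z))) := by
            rw [hPAB, tailP Z₁ hZ₁m hZ₁, ← ENNReal.ofReal_add hA1 hA2]
    have htR : (P {ω | u < Phi (Z₁ ω) ∧ u < Phi (Z₂ ω)}).toReal
        ≤ (1 - Phi z) * (1 - Phi (kap * z / s)) + (1 - Phi (lam * z)) := by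
      rw [hev]
      refine le_trans (ENNReal.toReal_mono ENNReal.ofReal_ne_top hmb) ?_
      exact le_of_eq (ENNReal.toReal_ofReal (by linarith))
    have h1u : (0:ℝ) < 1 - u := by linarith [hu.2]
    have h1Φ : (0:ℝ) < 1 - Phi z := by rw [hΦz]; exact h1u
    have hstep : (P {ω | u < Phi (Z₁ ω) ∧ u < Phi (Z₂ ω)}).toReal / (1 - u)
        ≤ ((1 - Phi z) * (1 - Phi (kap * z / s)) + (1 - Phi (lam * z))) / (1 - Phi z) := by
      rw [show (1:ℝ) - u = 1 - Phi z from by rw [hΦz]]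
      exact div_le_div_of_nonneg_right htR h1Φ.le
    refine hstep.trans ?_
    have htail := tail_le hlam.le hz0.le
    have hsplit : ((1 - Phi z) * (1 - Phi (kap * z / s)) + (1 - Phi (lam * z))) / (1 - Phi z)
        = (1 - Phi (kap * z / s)) + (1 - Phi (lam * z)) / (1 - Phi z) := by
      field_simp
    rw [hsplit]
    have h2 : (1 - Phi (lam * z)) / (1 - Phi z)
        ≤ lam * Real.exp (-((lam ^ 2 - 1) * z ^ 2) / 2) := by
      rw [div_le_iff₀ h1Φ]
      exact htail
    linarith
  -- PhiInv tends to infinity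
  have hzTop : Tendsto PhiInv (nhdsWithin (1:ℝ) (Set.Iio 1)) atTop := by
    rw [tendsto_atTop]
    intro M
    have hlt : max (Phi M) (Phi 1) < 1 := max_lt (Phi_lt_one M) (Phi_lt_one 1)
    have hmem : Ioo (max (Phi M) (Phi 1)) 1 ∈ nhdsWithin (1:ℝ) (Set.Iio 1) :=
      Ioo_mem_nhdsLT_of_mem ⟨hlt, le_refl 1⟩
    filter_upwards [hmem] with u hu
    have hu01 : u ∈ Ioo (0:ℝ) 1 :=
      ⟨lt_trans (lt_of_lt_of_le (Phi_pos M) (le_max_left _ _)) hu.1, hu.2⟩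
    have hΦ := Phi_PhiInv hu01
    have h : Phi M < Phi (PhiInv u) := by
      rw [hΦ]; exact lt_of_le_of_lt (le_max_left _ _) hu.1
    exact (Phi_strictMono.lt_iff_lt.1 h).le
  -- the dominating function tends to zero
  have hG : Tendsto (fun z : ℝ => (1 - Phi (kap * z / s))
      + lam * Real.exp (-((lam ^ 2 - 1) * z ^ 2) / 2)) atTop (𝓝 0) := by
    have h1 : Tendsto (fun z : ℝ => kap * z / s) atTop atTop := by
      apply Tendsto.atTop_div_const hs
      exact tendsto_id.const_mul_atTop hkap
    have h2 : Tendsto (fun z : ℝ => 1 - Phi (kap * z / s)) atTop (𝓝 0) := by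
      have := (tendsto_const_nhds (x := (1:ℝ)) (f := atTop)).sub
        (tendsto_Phi_atTop.comp h1)
      simpa using this
    have h3 : Tendsto (fun z : ℝ => lam * Real.exp (-((lam ^ 2 - 1) * z ^ 2) / 2))
        atTop (𝓝 0) := by
      rw [show (0:ℝ) = lam * 0 by ring]
      apply Tendsto.const_mul
      apply Real.tendsto_exp_atBot.comp
      have hq : Tendsto (fun z : ℝ => z ^ 2) atTop atTop :=
        tendsto_pow_atTop two_ne_zero
      have hc2 : (0:ℝ) < (lam ^ 2 - 1) / 2 := by nlinarith
      have := (hq.const_mul_atTop hc2)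
      have hneg := tendsto_neg_atTop_atBot.comp this
      convert hneg using 1
      funext x
      simp [Function.comp]
      ring
    simpa using h2.add h3
  -- squeeze
  refine tendsto_of_tendsto_of_tendsto_of_le_of_le' tendsto_const_nhds
    (hG.comp hzTop) ?_ ?_
  · filter_upwards [self_mem_nhdsWithin] with u hu
    exact div_nonneg ENNReal.toReal_nonneg (by linarith [mem_Iio.1 hu])
  · filter_upwards [Ioo_mem_nhdsLT_of_mem ⟨Phi_lt_one 1, le_refl (1:ℝ)⟩] with u hu
    exact key u hu
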